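/- Let A_1,...,A_n and B_1,...,B_n be n×n complex Hermitian matrices satisfying the synchronous Hadamard property, i.e., (A_j - A_i) ∘ (B_j - B_i) is positive semidefinite for all i, j, where ∘ denotes the entrywise (Hadamard) product. Let ω_1,...,ω_n and ν_1,...,ν_n be nonnegative reals. Then (∑_i ω_i)(∑_j ν_j (A_j ∘ B_j)) + (∑_i ν_i)(∑_j ω_j (A_j ∘ B_j)) ≥ (∑_i ω_i A_i) ∘ (∑_j ν_j B_j) + (∑_i ν_i A_i) ∘ (∑_j ω_j B_j) in the Loewner (positive semidefinite) order. -/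

import Mathlib

open Matrix ComplexOrder

lemma psd_sum' {ι : Type*} {m : Type*} [Fintype m] (s : Finset ι)
    (f : ι → Matrix m m ℂ) (h : ∀ i ∈ s, (f i).PosSemidef) :
    (∑ i ∈ s, f i).PosSemidef :=
  Finset.sum_induction f _ (fun _ _ ha hb => ha.add hb) Matrix.PosSemidef.zero h

lemma psd_smul' {m : Type*} [Fintype m] {M : Matrix m m ℂ} (hM : M.PosSemidef)
    {r : ℝ} (hr : 0 ≤ r) : (r • M).PosSemidef := by
  refine Matrix.posSemidef_iff_dotProduct_mulVec.mpr ⟨?_, fun x => ?_⟩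
  · rw [Matrix.IsHermitian, Matrix.conjTranspose_smul, star_trivial, hM.1]
  · have h1 : star x ⬝ᵥ (r • M) *ᵥ x = (r : ℂ) * (star x ⬝ᵥ M *ᵥ x) := by
      simp [Matrix.smul_mulVec, dotProduct_smul, Complex.real_smul]
    rw [h1]
    exact mul_nonneg (by exact_mod_cast hr) (hM.dotProduct_mulVec_nonneg x)

lemma scalar_cheb {ι : Type*} (s : Finset ι) (w v a b : ι → ℂ) :
    (∑ i ∈ s, w i) * (∑ j ∈ s, v j * (a j * b j)) +
      (∑ i ∈ s, v i) * (∑ j ∈ s, w j * (a j * b j)) -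
      ((∑ i ∈ s, w i * a i) * (∑ j ∈ s, v j * b j) +
       (∑ i ∈ s, v i * a i) * (∑ j ∈ s, w j * b j)) =
    ∑ i ∈ s, ∑ j ∈ s, (w i * v j) * ((a j - a i) * (b j - b i)) := by
  rw [Finset.sum_mul_sum, Finset.sum_mul_sum, Finset.sum_mul_sum, Finset.sum_mul_sum]
  rw [Finset.sum_comm (f := fun i j => v i * (w j * (a j * b j)))]
  rw [Finset.sum_comm (f := fun i j => v i * a i * (w j * b j))]
  simp only [← Finset.sum_sub_distrib, ← Finset.sum_add_distrib]
  exact Finset.sum_congr rfl fun i _ => Finset.sum_congr rfl fun j _ => by ring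

theorem chebyshev_hadamard_two_weight (n : ℕ)
    (A B : Fin n → Matrix (Fin n) (Fin n) ℂ)
    (hA : ∀ i, (A i).IsHermitian) (hB : ∀ i, (B i).IsHermitian)
    (hsync : ∀ i j, ((A j - A i).hadamard (B j - B i)).PosSemidef)
    (ω ν : Fin n → ℝ) (hω : ∀ i, 0 ≤ ω i) (hν : ∀ i, 0 ≤ ν i) :
    (((∑ i, ω i) • ∑ j, ν j • (A j).hadamard (B j) +
        (∑ i, ν i) • ∑ j, ω j • (A j).hadamard (B j)) -
      ((∑ i, ω i • A i).hadamard (∑ j, ν j • B j) +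
        (∑ i, ν i • A i).hadamard (∑ j, ω j • B j))).PosSemidef := by
  have key : (((∑ i, ω i) • ∑ j, ν j • (A j).hadamard (B j) +
        (∑ i, ν i) • ∑ j, ω j • (A j).hadamard (B j)) -
      ((∑ i, ω i • A i).hadamard (∑ j, ν j • B j) +
        (∑ i, ν i • A i).hadamard (∑ j, ω j • B j))) =
      ∑ i, ∑ j, (ω i * ν j) • ((A j - A i).hadamard (B j - B i)) := by
    ext k l
    simp only [Matrix.sub_apply, Matrix.add_apply, Matrix.smul_apply, Matrix.sum_apply,
      Matrix.hadamard_apply, Complex.real_smul, Complex.ofReal_sum, Complex.ofReal_mul]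
    rw [← scalar_cheb Finset.univ (fun i => (ω i : ℂ)) (fun i => (ν i : ℂ))
      (fun i => A i k l) (fun i => B i k l)]
  rw [key]
  refine psd_sum' _ _ (fun i _ => psd_sum' _ _ (fun j _ => ?_))
  exact psd_smul' (hsync i j) (mul_nonneg (hω i) (hν j))
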